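/- arXiv:2003.04108 — 4 statements merged into one kernel-verified Lean document; each statement's English description precedes it below -/
import Mathlib

section
/- Performance difference lemma: for all policies π and π' of a finite discounted MDP, J(π') = J(π) + ∑_{s∈S} d^{π'}_ρ(s) ∑_{a∈A} π'(a|s) A^π(s,a). -/
open Finset

noncomputable section

variable {S A : Type*} [Fintype S] [Fintype A]

/-- The t-step state distribution of policy `π` started from `ρ`. -/
def stateDist (P : S → A → S → ℝ) (π : S → A → ℝ) (ρ : S → ℝ) : ℕ → S → ℝ
  | 0 => ρ
  | t + 1 => fun s' => ∑ s, ∑ a, stateDist P π ρ t s * π s a * P s a s'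

/-- The discounted state visitation distribution `d^π_ρ`. -/
def dvisit (P : S → A → S → ℝ) (π : S → A → ℝ) (ρ : S → ℝ) (γ : ℝ) (s : S) : ℝ :=
  (1 - γ) * ∑' t : ℕ, γ ^ t * stateDist P π ρ t s

/-- Performance difference lemma:
`J(π') = J(π) + ∑_s d^{π'}_ρ(s) ∑_a π'(a|s) A^π(s,a)`. -/
theorem performance_difference
    [Nonempty S] [Nonempty A]
    (P : S → A → S → ℝ) (r : S → A → ℝ) (γ : ℝ) (ρ : S → ℝ)
    (hγ0 : 0 ≤ γ) (hγ1 : γ < 1)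
    (hP0 : ∀ s a s', 0 ≤ P s a s') (hP1 : ∀ s a, ∑ s', P s a s' = 1)
    (hρ0 : ∀ s, 0 ≤ ρ s) (hρ1 : ∑ s, ρ s = 1)
    (π π' : S → A → ℝ)
    (hπ0 : ∀ s a, 0 ≤ π s a) (hπ1 : ∀ s, ∑ a, π s a = 1)
    (hπ'0 : ∀ s a, 0 ≤ π' s a) (hπ'1 : ∀ s, ∑ a, π' s a = 1)
    (V V' : S → ℝ)
    (hV : ∀ s, V s = ∑ a, π s a * (r s a + γ * ∑ s', P s a s' * V s'))
    (hV' : ∀ s, V' s = ∑ a, π' s a * (r s a + γ * ∑ s', P s a s' * V' s')) :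
    (1 - γ) * ∑ s, ρ s * V' s
      = (1 - γ) * ∑ s, ρ s * V s
        + ∑ s, dvisit P π' ρ γ s *
            ∑ a, π' s a * ((r s a + γ * ∑ s', P s a s' * V s') - V s) := by
  set d := stateDist P π' ρ with hdd
  set g : S → ℝ := fun s => ∑ a, π' s a * ((r s a + γ * ∑ s', P s a s' * V s') - V s) with hg
  set Δ : S → ℝ := fun s => V' s - V s with hΔ
  have hd0 : ∀ t s, 0 ≤ d t s := by
    intro t
    induction t with
    | zero => exact hρ0
    | succ t ih =>
      intro s'
      show (0:ℝ) ≤ ∑ s, ∑ a, d t s * π' s a * P s a s'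
      refine Finset.sum_nonneg fun s _ => Finset.sum_nonneg fun a _ => ?_
      exact mul_nonneg (mul_nonneg (ih s) (hπ'0 s a)) (hP0 s a s')
  have hd1 : ∀ t, ∑ s, d t s = 1 := by
    intro t
    induction t with
    | zero => exact hρ1
    | succ t ih =>
      show ∑ s', ∑ s, ∑ a, d t s * π' s a * P s a s' = 1
      rw [Finset.sum_comm]
      calc ∑ s, ∑ s', ∑ a, d t s * π' s a * P s a s'
          = ∑ s, d t s * ∑ a, π' s a * ∑ s', P s a s' := by
            congr 1; ext s
            rw [Finset.sum_comm]
            simp [Finset.mul_sum, mul_assoc]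
        _ = 1 := by simp [hP1, hπ'1, ih]
  have hdle : ∀ t s, d t s ≤ 1 := by
    intro t s
    calc d t s ≤ ∑ s', d t s' := Finset.single_le_sum (fun s' _ => hd0 t s') (mem_univ s)
      _ = 1 := hd1 t
  have key : ∀ s, Δ s = g s + γ * ∑ s', (∑ a, π' s a * P s a s') * Δ s' := by
    intro s
    have h2 : g s = (∑ a, π' s a * (r s a + γ * ∑ s', P s a s' * V s')) - V s := by
      simp only [hg, mul_sub, Finset.sum_sub_distrib, ← Finset.sum_mul, hπ'1 s, one_mul]
    have h3 : ∑ s', (∑ a, π' s a * P s a s') * Δ s'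
        = ∑ a, π' s a * (∑ s', P s a s' * Δ s') := by
      simp only [Finset.sum_mul, Finset.mul_sum]
      rw [Finset.sum_comm]
      simp [mul_assoc]
    rw [h2, h3]
    have : Δ s = (∑ a, π' s a * (r s a + γ * ∑ s', P s a s' * V' s')) - V s := by
      rw [hΔ]; simp [← hV' s]
    rw [this]
    simp only [hΔ, mul_sub, Finset.mul_sum, Finset.sum_sub_distrib, mul_add,
      Finset.sum_add_distrib]
    ring_nf
    simp [mul_comm, mul_left_comm, Finset.mul_sum]
    ring
  have hstep : ∀ t, ∑ s, d t s * Δ s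
      = ∑ s, d t s * g s + γ * ∑ s', d (t+1) s' * Δ s' := by
    intro t
    have hrec : ∀ s', d (t+1) s' = ∑ s, ∑ a, d t s * π' s a * P s a s' := fun _ => rfl
    calc ∑ s, d t s * Δ s
        = ∑ s, (d t s * g s + γ * ∑ s', d t s * ((∑ a, π' s a * P s a s') * Δ s')) := by
          refine Finset.sum_congr rfl fun s _ => ?_
          rw [key s, mul_add]
          congr 1
          simp only [Finset.mul_sum]
          exact Finset.sum_congr rfl fun s' _ => by ring
      _ = ∑ s, d t s * g s + γ * ∑ s, ∑ s', d t s * ((∑ a, π' s a * P s a s') * Δ s') := by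
          rw [Finset.sum_add_distrib, Finset.mul_sum]
      _ = ∑ s, d t s * g s + γ * ∑ s', d (t+1) s' * Δ s' := by
          congr 1
          congr 1
          rw [Finset.sum_comm]
          refine Finset.sum_congr rfl fun s' _ => ?_
          rw [hrec s', Finset.sum_mul]
          refine Finset.sum_congr rfl fun s _ => ?_
          simp only [Finset.sum_mul, Finset.mul_sum]
          exact Finset.sum_congr rfl fun a _ => by ring
  have htel : ∀ N, ∑ s, ρ s * Δ s
      = (∑ t ∈ Finset.range N, γ^t * ∑ s, d t s * g s) + γ^N * ∑ s, d N s * Δ s := by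
    intro N
    induction N with
    | zero => simp [hdd]; rfl
    | succ N ih =>
      rw [ih, hstep N, Finset.sum_range_succ]
      ring
  -- summability facts
  have hgeo : Summable (fun t : ℕ => γ ^ t) := summable_geometric_of_lt_one hγ0 hγ1
  set C : ℝ := ∑ s, |g s| with hC
  have hbound : ∀ t, |∑ s, d t s * g s| ≤ C := by
    intro t
    calc |∑ s, d t s * g s| ≤ ∑ s, |d t s * g s| := Finset.abs_sum_le_sum_abs _ _
      _ ≤ ∑ s, |g s| := by
          refine Finset.sum_le_sum fun s _ => ?_
          rw [abs_mul, abs_of_nonneg (hd0 t s)]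
          exact mul_le_of_le_one_left (abs_nonneg _) (hdle t s)
  set F : ℕ → ℝ := fun t => γ^t * ∑ s, d t s * g s with hF
  have hFsum : Summable F := by
    refine Summable.of_norm_bounded (hgeo.mul_left C) fun t => ?_
    rw [Real.norm_eq_abs, hF, abs_mul, abs_of_nonneg (pow_nonneg hγ0 t)]
    calc γ^t * |∑ s, d t s * g s| ≤ γ^t * C := by
          exact mul_le_mul_of_nonneg_left (hbound t) (pow_nonneg hγ0 t)
      _ = C * γ^t := by ring
  have htail : Filter.Tendsto (fun N => γ^N * ∑ s, d N s * Δ s) Filter.atTop (nhds 0) := by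
    set D : ℝ := ∑ s, |Δ s| with hD
    have hb : ∀ N, ‖γ^N * ∑ s, d N s * Δ s‖ ≤ D * γ^N := by
      intro N
      rw [Real.norm_eq_abs, abs_mul, abs_of_nonneg (pow_nonneg hγ0 N)]
      have : |∑ s, d N s * Δ s| ≤ D := by
        calc |∑ s, d N s * Δ s| ≤ ∑ s, |d N s * Δ s| := Finset.abs_sum_le_sum_abs _ _
          _ ≤ ∑ s, |Δ s| := by
              refine Finset.sum_le_sum fun s _ => ?_
              rw [abs_mul, abs_of_nonneg (hd0 N s)]
              exact mul_le_of_le_one_left (abs_nonneg _) (hdle N s)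
      calc γ^N * |∑ s, d N s * Δ s| ≤ γ^N * D :=
            mul_le_mul_of_nonneg_left this (pow_nonneg hγ0 N)
        _ = D * γ^N := by ring
    refine squeeze_zero_norm hb ?_
    simpa using (tendsto_pow_atTop_nhds_zero_of_lt_one hγ0 hγ1).const_mul D
  have htsum : ∑' t, F t = ∑ s, ρ s * Δ s := by
    have h1 : Filter.Tendsto (fun N => ∑ t ∈ Finset.range N, F t) Filter.atTop
        (nhds (∑' t, F t)) := hFsum.hasSum.tendsto_sum_nat
    have h2 : Filter.Tendsto (fun N => ∑ t ∈ Finset.range N, F t) Filter.atTop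
        (nhds (∑ s, ρ s * Δ s)) := by
      have : ∀ N, ∑ t ∈ Finset.range N, F t
          = ∑ s, ρ s * Δ s - γ^N * ∑ s, d N s * Δ s := by
        intro N; rw [htel N]; ring
      simp only [this]
      simpa using Filter.Tendsto.sub (tendsto_const_nhds (x := ∑ s, ρ s * Δ s)) htail
    exact tendsto_nhds_unique h1 h2
  have hsummable_s : ∀ s, Summable (fun t => γ^t * d t s * g s) := by
    intro s
    refine Summable.mul_right (g s) ?_
    refine Summable.of_norm_bounded hgeo fun t => ?_
    rw [Real.norm_eq_abs, abs_mul, abs_of_nonneg (pow_nonneg hγ0 t),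
      abs_of_nonneg (hd0 t s)]
    exact mul_le_of_le_one_right (pow_nonneg hγ0 t) (hdle t s)
  have hswap : ∑ s, dvisit P π' ρ γ s * g s = (1 - γ) * ∑' t, F t := by
    calc ∑ s, dvisit P π' ρ γ s * g s
        = ∑ s, (1 - γ) * ∑' t, γ^t * d t s * g s := by
          refine Finset.sum_congr rfl fun s _ => ?_
          rw [dvisit, mul_assoc]
          congr 1
          rw [← tsum_mul_right]
      _ = (1 - γ) * ∑ s, ∑' t, γ^t * d t s * g s := by rw [Finset.mul_sum]
      _ = (1 - γ) * ∑' t, ∑ s, γ^t * d t s * g s := by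
          rw [← Summable.tsum_finsetSum (fun s _ => hsummable_s s)]
      _ = (1 - γ) * ∑' t, F t := by
          congr 1
          refine tsum_congr fun t => ?_
          show ∑ s, γ^t * d t s * g s = γ^t * ∑ s, d t s * g s
          rw [Finset.mul_sum]
          exact Finset.sum_congr rfl fun s _ => by ring
  rw [hswap, htsum]
  have : ∑ s, ρ s * Δ s = ∑ s, ρ s * V' s - ∑ s, ρ s * V s := by
    simp [hΔ, mul_sub, Finset.sum_sub_distrib]
  rw [this]
  ring
end
end

section
/- For all policies π and π' of a finite discounted MDP, J(π') ≥ L_π(π') − ε^π · D_TV(d^{π'}_ρ ‖ d^π_ρ), where ε^π = max_{s∈S} |∑_{a∈A} π'(a|s) A^π(s,a)|. -/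
open Finset

noncomputable section

variable {S A : Type*} [Fintype S] [Fintype A]

/-- Total variation distance between real-valued functions on a finite set. -/
def dTV {X : Type*} [Fintype X] (p q : X → ℝ) : ℝ := ∑ x, |p x - q x|

lemma stateDist_nonneg (P : S → A → S → ℝ) (π : S → A → ℝ) (ρ : S → ℝ)
    (hP0 : ∀ s a s', 0 ≤ P s a s') (hρ0 : ∀ s, 0 ≤ ρ s)
    (hπ0 : ∀ s a, 0 ≤ π s a) : ∀ t s, 0 ≤ stateDist P π ρ t s := by
  intro t
  induction t with
  | zero => exact hρ0
  | succ t ih =>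
    intro s'
    exact Finset.sum_nonneg fun s _ => Finset.sum_nonneg fun a _ =>
      mul_nonneg (mul_nonneg (ih s) (hπ0 s a)) (hP0 s a s')

lemma stateDist_sum_one (P : S → A → S → ℝ) (π : S → A → ℝ) (ρ : S → ℝ)
    (hP1 : ∀ s a, ∑ s', P s a s' = 1) (hρ1 : ∑ s, ρ s = 1)
    (hπ1 : ∀ s, ∑ a, π s a = 1) : ∀ t, ∑ s, stateDist P π ρ t s = 1 := by
  intro t
  induction t with
  | zero => exact hρ1
  | succ t ih =>
    show ∑ s', ∑ s, ∑ a, stateDist P π ρ t s * π s a * P s a s' = 1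
    rw [Finset.sum_comm]
    calc ∑ s, ∑ s', ∑ a, stateDist P π ρ t s * π s a * P s a s'
        = ∑ s, stateDist P π ρ t s := by
          refine Finset.sum_congr rfl fun s _ => ?_
          rw [Finset.sum_comm]
          calc ∑ a, ∑ s', stateDist P π ρ t s * π s a * P s a s'
              = ∑ a, stateDist P π ρ t s * π s a := by
                refine Finset.sum_congr rfl fun a _ => ?_
                rw [← Finset.mul_sum, hP1 s a, mul_one]
            _ = stateDist P π ρ t s := by rw [← Finset.mul_sum, hπ1 s, mul_one]
      _ = 1 := ih

lemma stateDist_step (P : S → A → S → ℝ) (π : S → A → ℝ) (ρ : S → ℝ)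
    (f : S → ℝ) (t : ℕ) :
    ∑ s', stateDist P π ρ (t + 1) s' * f s'
      = ∑ s, stateDist P π ρ t s * ∑ a, π s a * ∑ s', P s a s' * f s' := by
  show ∑ s', (∑ s, ∑ a, stateDist P π ρ t s * π s a * P s a s') * f s' = _
  simp only [Finset.sum_mul, Finset.mul_sum]
  rw [Finset.sum_comm]
  refine Finset.sum_congr rfl fun s _ => ?_
  rw [Finset.sum_comm]
  exact Finset.sum_congr rfl fun a _ => Finset.sum_congr rfl fun s' _ => by ring

/-- Performance difference lemma. -/
lemma pdl [Nonempty S] (P : S → A → S → ℝ) (r : S → A → ℝ) (γ : ℝ) (ρ : S → ℝ)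
    (hγ0 : 0 ≤ γ) (hγ1 : γ < 1)
    (hP0 : ∀ s a s', 0 ≤ P s a s') (hP1 : ∀ s a, ∑ s', P s a s' = 1)
    (hρ0 : ∀ s, 0 ≤ ρ s) (hρ1 : ∑ s, ρ s = 1)
    (π' : S → A → ℝ)
    (hπ'0 : ∀ s a, 0 ≤ π' s a) (hπ'1 : ∀ s, ∑ a, π' s a = 1)
    (V V' : S → ℝ)
    (hV' : ∀ s, V' s = ∑ a, π' s a * (r s a + γ * ∑ s', P s a s' * V' s')) :
    ∑ s, dvisit P π' ρ γ s * ∑ a, π' s a * ((r s a + γ * ∑ s', P s a s' * V s') - V s)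
      = (1 - γ) * ∑ s, ρ s * V' s - (1 - γ) * ∑ s, ρ s * V s := by
  set d : ℕ → S → ℝ := stateDist P π' ρ with hd
  have hd0 : ∀ t s, 0 ≤ d t s := stateDist_nonneg P π' ρ hP0 hρ0 hπ'0
  have hd1 : ∀ t, ∑ s, d t s = 1 := stateDist_sum_one P π' ρ hP1 hρ1 hπ'1
  set g : S → ℝ := fun s => ∑ a, π' s a * ((r s a + γ * ∑ s', P s a s' * V s') - V s)
    with hgdef
  set u : ℕ → ℝ := fun t => ∑ s, d t s * g s with hu
  set W : ℕ → ℝ := fun t => ∑ s, d t s * V s with hW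
  set X : ℕ → ℝ := fun t => ∑ s, d t s * V' s with hX
  set R : ℕ → ℝ := fun t => ∑ s, d t s * ∑ a, π' s a * r s a with hR
  -- recursion for X
  have hVsplit : ∀ s, V' s = (∑ a, π' s a * r s a)
      + γ * ∑ a, π' s a * ∑ s', P s a s' * V' s' := by
    intro s
    rw [hV' s, Finset.mul_sum, ← Finset.sum_add_distrib]
    exact Finset.sum_congr rfl fun a _ => by ring
  have hXrec : ∀ t, X t = R t + γ * X (t + 1) := by
    intro t
    have hstep := stateDist_step P π' ρ V' t
    rw [← hd] at hstep
    calc X t = ∑ s, d t s * ((∑ a, π' s a * r s a)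
          + γ * ∑ a, π' s a * ∑ s', P s a s' * V' s') :=
          Finset.sum_congr rfl fun s _ => by rw [← hVsplit s]
      _ = ∑ s, (d t s * ∑ a, π' s a * r s a
            + γ * (d t s * ∑ a, π' s a * ∑ s', P s a s' * V' s')) :=
          Finset.sum_congr rfl fun s _ => by ring
      _ = (∑ s, d t s * ∑ a, π' s a * r s a)
            + ∑ s, γ * (d t s * ∑ a, π' s a * ∑ s', P s a s' * V' s') :=
          Finset.sum_add_distrib
      _ = R t + γ * ∑ s, d t s * ∑ a, π' s a * ∑ s', P s a s' * V' s' := by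
          rw [hR, ← Finset.mul_sum]
      _ = R t + γ * X (t + 1) := by simp only [hX]; rw [← hstep]
  -- formula for u
  have hgs : ∀ s, g s = ((∑ a, π' s a * r s a)
      + γ * ∑ a, π' s a * ∑ s', P s a s' * V s') - V s := by
    intro s
    have h1 : g s = (∑ a, π' s a * (r s a + γ * ∑ s', P s a s' * V s'))
        - (∑ a, π' s a) * V s := by
      rw [hgdef]
      simp only [Finset.sum_mul, ← Finset.sum_sub_distrib]
      exact Finset.sum_congr rfl fun a _ => by ring
    rw [h1, hπ'1 s, one_mul]
    congr 1
    rw [Finset.mul_sum, ← Finset.sum_add_distrib]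
    exact Finset.sum_congr rfl fun a _ => by ring
  have hurec : ∀ t, u t = R t + γ * W (t + 1) - W t := by
    intro t
    have hstep := stateDist_step P π' ρ V t
    rw [← hd] at hstep
    calc u t = ∑ s, ((d t s * ∑ a, π' s a * r s a
            + γ * (d t s * ∑ a, π' s a * ∑ s', P s a s' * V s')) - d t s * V s) :=
          Finset.sum_congr rfl fun s _ => by rw [hgs s]; ring
      _ = (∑ s, (d t s * ∑ a, π' s a * r s a
            + γ * (d t s * ∑ a, π' s a * ∑ s', P s a s' * V s'))) - ∑ s, d t s * V s :=
          Finset.sum_sub_distrib _ _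
      _ = (R t + γ * ∑ s, d t s * ∑ a, π' s a * ∑ s', P s a s' * V s') - W t := by
          rw [Finset.sum_add_distrib, hR, hW, ← Finset.mul_sum]
      _ = R t + γ * W (t + 1) - W t := by simp only [hW]; rw [← hstep]
  -- closed form for partial sums
  have hF : ∀ n, ∑ t ∈ Finset.range n, γ ^ t * u t
      = (X 0 - W 0) + γ ^ n * (W n - X n) := by
    intro n
    induction n with
    | zero => simp
    | succ n ih =>
      rw [Finset.sum_range_succ, ih, hurec n]
      have h1 : R n = X n - γ * X (n + 1) := by linarith [hXrec n]
      rw [h1]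
      ring
  -- uniform bounds
  have hbd : ∀ (f : S → ℝ) (M : ℝ), (∀ s, |f s| ≤ M) →
      ∀ t, |∑ s, d t s * f s| ≤ M := by
    intro f M hM t
    calc |∑ s, d t s * f s| ≤ ∑ s, |d t s * f s| := Finset.abs_sum_le_sum_abs _ _
      _ ≤ ∑ s, d t s * M := by
          refine Finset.sum_le_sum fun s _ => ?_
          rw [abs_mul, abs_of_nonneg (hd0 t s)]
          exact mul_le_mul_of_nonneg_left (hM s) (hd0 t s)
      _ = M := by rw [← Finset.sum_mul, hd1 t, one_mul]
  -- summability of γ^t * u t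
  set ε : ℝ := Finset.univ.sup' Finset.univ_nonempty (fun s => |g s|) with hε
  have hgε : ∀ s, |g s| ≤ ε :=
    fun s => Finset.le_sup' (f := fun s => |g s|) (Finset.mem_univ s)
  have huε : ∀ t, |u t| ≤ ε := fun t => hbd g ε hgε t
  have hsummable : Summable (fun t : ℕ => γ ^ t * u t) := by
    refine Summable.of_norm_bounded
      ((summable_geometric_of_lt_one hγ0 hγ1).mul_left ε) fun t => ?_
    show |γ ^ t * u t| ≤ ε * γ ^ t
    rw [abs_mul, abs_pow, abs_of_nonneg hγ0, mul_comm]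
    exact mul_le_mul_of_nonneg_right (huε t) (pow_nonneg hγ0 t)
  -- limit of partial sums
  set M : ℝ := Finset.univ.sup' Finset.univ_nonempty (fun s => |V s - V' s|) with hM
  have hMV : ∀ s, |V s - V' s| ≤ M :=
    fun s => Finset.le_sup' (f := fun s => |V s - V' s|) (Finset.mem_univ s)
  have hWXbd : ∀ n, |W n - X n| ≤ M := by
    intro n
    have h1 : W n - X n = ∑ s, d n s * (V s - V' s) := by
      rw [hW, hX]
      simp only [← Finset.sum_sub_distrib]
      exact Finset.sum_congr rfl fun s _ => by ring
    rw [h1]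
    exact hbd _ M hMV n
  have htend : Filter.Tendsto (fun n => ∑ t ∈ Finset.range n, γ ^ t * u t)
      Filter.atTop (nhds (X 0 - W 0)) := by
    have h0 : Filter.Tendsto (fun n : ℕ => γ ^ n * (W n - X n))
        Filter.atTop (nhds 0) := by
      have hgeo : Filter.Tendsto (fun n : ℕ => M * γ ^ n) Filter.atTop (nhds 0) := by
        simpa using (tendsto_pow_atTop_nhds_zero_of_lt_one hγ0 hγ1).const_mul M
      refine squeeze_zero_norm (fun n => ?_) hgeo
      rw [Real.norm_eq_abs, abs_mul, abs_pow, abs_of_nonneg hγ0, mul_comm]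
      exact mul_le_mul_of_nonneg_right (hWXbd n) (pow_nonneg hγ0 n)
    have h1 := h0.const_add (X 0 - W 0)
    simp only [add_zero] at h1
    simp only [hF]
    exact h1
  have htsum : ∑' t : ℕ, γ ^ t * u t = X 0 - W 0 :=
    tendsto_nhds_unique hsummable.hasSum.tendsto_sum_nat htend
  -- summability per state
  have hdsum : ∀ s, Summable (fun t : ℕ => γ ^ t * d t s) := by
    intro s
    refine Summable.of_norm_bounded
      (summable_geometric_of_lt_one hγ0 hγ1) fun t => ?_
    rw [Real.norm_eq_abs, abs_mul, abs_pow, abs_of_nonneg hγ0,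
      abs_of_nonneg (hd0 t s)]
    have hle : d t s ≤ 1 := by
      have h1 := Finset.single_le_sum (f := fun s => d t s)
        (fun s _ => hd0 t s) (Finset.mem_univ s)
      rw [hd1 t] at h1
      exact h1
    calc γ ^ t * d t s ≤ γ ^ t * 1 :=
          mul_le_mul_of_nonneg_left hle (pow_nonneg hγ0 t)
      _ = γ ^ t := mul_one _
  have hX0 : X 0 = ∑ s, ρ s * V' s := rfl
  have hW0 : W 0 = ∑ s, ρ s * V s := rfl
  calc ∑ s, dvisit P π' ρ γ s * g s
      = (1 - γ) * ∑ s, ∑' t : ℕ, γ ^ t * d t s * g s := by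
        rw [Finset.mul_sum]
        refine Finset.sum_congr rfl fun s _ => ?_
        rw [dvisit, tsum_mul_right, ← hd]
        ring
    _ = (1 - γ) * ∑' t : ℕ, ∑ s, γ ^ t * d t s * g s := by
        rw [← Summable.tsum_finsetSum (fun s _ => (hdsum s).mul_right (g s))]
    _ = (1 - γ) * ∑' t : ℕ, γ ^ t * u t := by
        congr 1
        refine tsum_congr fun t => ?_
        rw [hu]
        simp only [Finset.mul_sum]
        exact Finset.sum_congr rfl fun s _ => by ring
    _ = (1 - γ) * (X 0 - W 0) := by rw [htsum]
    _ = (1 - γ) * ∑ s, ρ s * V' s - (1 - γ) * ∑ s, ρ s * V s := by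
        rw [hX0, hW0]; ring

/-- `J(π') ≥ L_π(π') − ε^π · D_TV(d^{π'}_ρ ‖ d^π_ρ)` where
`ε^π = max_s |∑_a π'(a|s) A^π(s,a)|`. -/
theorem surrogate_lower_bound
    [Nonempty S] [Nonempty A]
    (P : S → A → S → ℝ) (r : S → A → ℝ) (γ : ℝ) (ρ : S → ℝ)
    (hγ0 : 0 ≤ γ) (hγ1 : γ < 1)
    (hP0 : ∀ s a s', 0 ≤ P s a s') (hP1 : ∀ s a, ∑ s', P s a s' = 1)
    (hρ0 : ∀ s, 0 ≤ ρ s) (hρ1 : ∑ s, ρ s = 1)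
    (π π' : S → A → ℝ)
    (hπ0 : ∀ s a, 0 ≤ π s a) (hπ1 : ∀ s, ∑ a, π s a = 1)
    (hπ'0 : ∀ s a, 0 ≤ π' s a) (hπ'1 : ∀ s, ∑ a, π' s a = 1)
    (V V' : S → ℝ)
    (hV : ∀ s, V s = ∑ a, π s a * (r s a + γ * ∑ s', P s a s' * V s'))
    (hV' : ∀ s, V' s = ∑ a, π' s a * (r s a + γ * ∑ s', P s a s' * V' s')) :
    (1 - γ) * ∑ s, ρ s * V' s
      ≥ ((1 - γ) * ∑ s, ρ s * V s
          + ∑ s, dvisit P π ρ γ s *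
              ∑ a, π' s a * ((r s a + γ * ∑ s', P s a s' * V s') - V s))
        - (Finset.univ.sup' Finset.univ_nonempty
              (fun s => |∑ a, π' s a * ((r s a + γ * ∑ s', P s a s' * V s') - V s)|))
          * dTV (dvisit P π' ρ γ) (dvisit P π ρ γ) := by
  have hpdl := pdl P r γ ρ hγ0 hγ1 hP0 hP1 hρ0 hρ1 π' hπ'0 hπ'1 V V' hV'
  set ε : ℝ := Finset.univ.sup' Finset.univ_nonempty
    (fun s => |∑ a, π' s a * ((r s a + γ * ∑ s', P s a s' * V s') - V s)|) with hε
  have hεG : ∀ s, |∑ a, π' s a * ((r s a + γ * ∑ s', P s a s' * V s') - V s)| ≤ ε :=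
    fun s => Finset.le_sup'
      (f := fun s => |∑ a, π' s a * ((r s a + γ * ∑ s', P s a s' * V s') - V s)|)
      (Finset.mem_univ s)
  have key : ∑ s, dvisit P π ρ γ s *
        ∑ a, π' s a * ((r s a + γ * ∑ s', P s a s' * V s') - V s)
      - ∑ s, dvisit P π' ρ γ s *
        ∑ a, π' s a * ((r s a + γ * ∑ s', P s a s' * V s') - V s)
      ≤ ε * dTV (dvisit P π' ρ γ) (dvisit P π ρ γ) := by
    rw [← Finset.sum_sub_distrib, dTV, Finset.mul_sum]
    refine Finset.sum_le_sum fun s _ => ?_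
    set G : ℝ := ∑ a, π' s a * ((r s a + γ * ∑ s', P s a s' * V s') - V s) with hG
    have h1 : dvisit P π ρ γ s * G - dvisit P π' ρ γ s * G
        = -((dvisit P π' ρ γ s - dvisit P π ρ γ s) * G) := by ring
    rw [h1]
    calc -((dvisit P π' ρ γ s - dvisit P π ρ γ s) * G)
        ≤ |(dvisit P π' ρ γ s - dvisit P π ρ γ s) * G| := neg_le_abs _
      _ = |dvisit P π' ρ γ s - dvisit P π ρ γ s| * |G| := abs_mul _ _
      _ ≤ |dvisit P π' ρ γ s - dvisit P π ρ γ s| * ε :=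
          mul_le_mul_of_nonneg_left (hεG s) (abs_nonneg _)
      _ = ε * |dvisit P π' ρ γ s - dvisit P π ρ γ s| := mul_comm _ _
  linarith [hpdl, key]
end
end

section
/- Let π be a policy with π(a|s) > 0 for all s ∈ S and a ∈ A, let π' be any policy, let ε ∈ (0,1), and set κ(s,a) = π'(a|s)/π(a|s). Define the clipped surrogate L^clip_π(π') = J(π) + ∑_{s∈S} ∑_{a∈A} μ^π_ρ(s,a) · min{ A^π(s,a)·κ(s,a), A^π(s,a)·clip(κ(s,a), 1−ε, 1+ε) }, where clip(x, l, u) = max(l, min(x, u)). Then J(π') ≥ L^clip_π(π') − ε^π · D_TV(d^{π'}_ρ ‖ d^π_ρ), where ε^π = max_{s∈S} |∑_{a∈A} π'(a|s) A^π(s,a)|. -/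
open Finset

noncomputable section

variable {S A : Type*} [Fintype S] [Fintype A]

/-- The clip function `clip(x, l, u) = max(l, min(x, u))`. -/
def clip (x l u : ℝ) : ℝ := max l (min x u)

lemma stateDist_le_one (P : S → A → S → ℝ) (π : S → A → ℝ) (ρ : S → ℝ)
    (hP0 : ∀ s a s', 0 ≤ P s a s') (hρ0 : ∀ s, 0 ≤ ρ s) (hπ0 : ∀ s a, 0 ≤ π s a)
    (hP1 : ∀ s a, ∑ s', P s a s' = 1) (hρ1 : ∑ s, ρ s = 1) (hπ1 : ∀ s, ∑ a, π s a = 1) :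
    ∀ t s, stateDist P π ρ t s ≤ 1 := by
  intro t s
  calc stateDist P π ρ t s ≤ ∑ s', stateDist P π ρ t s' :=
        Finset.single_le_sum (fun s' _ => stateDist_nonneg P π ρ hP0 hρ0 hπ0 t s')
          (Finset.mem_univ s)
    _ = 1 := stateDist_sum_one P π ρ hP1 hρ1 hπ1 t

/-- Telescoping: if `c t = u t + γ c (t+1)` and `c` is bounded, `∑' γ^t u t = c 0`. -/
lemma tele_hasSum (γ : ℝ) (hγ0 : 0 ≤ γ) (hγ1 : γ < 1) (c u : ℕ → ℝ) (M : ℝ)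
    (hrec : ∀ t, c t = u t + γ * c (t + 1)) (hb : ∀ t, |c t| ≤ M) :
    HasSum (fun t => γ ^ t * u t) (c 0) := by
  have hM0 : 0 ≤ M := le_trans (abs_nonneg _) (hb 0)
  have hubound : ∀ t, |u t| ≤ M * (1 + γ) := by
    intro t
    have hu : u t = c t - γ * c (t + 1) := by linarith [hrec t]
    have h1 : |u t| ≤ |c t| + |γ * c (t + 1)| := by rw [hu]; exact abs_sub _ _
    have h2 : |γ * c (t + 1)| = γ * |c (t + 1)| := by
      rw [abs_mul, abs_of_nonneg hγ0]
    have h3 := hb t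
    have h4 := hb (t + 1)
    nlinarith
  have hsummable : Summable (fun t => γ ^ t * u t) := by
    have hgeo : Summable (fun t : ℕ => γ ^ t * (M * (1 + γ))) :=
      (summable_geometric_of_lt_one hγ0 hγ1).mul_right _
    refine Summable.of_abs (Summable.of_nonneg_of_le (fun t => abs_nonneg _) (fun t => ?_) hgeo)
    rw [abs_mul, abs_pow, abs_of_nonneg hγ0]
    exact mul_le_mul_of_nonneg_left (hubound t) (pow_nonneg hγ0 t)
  have hpartial : ∀ n, ∑ t ∈ Finset.range n, γ ^ t * u t = c 0 - γ ^ n * c n := by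
    intro n
    induction n with
    | zero => simp
    | succ n ih =>
      rw [Finset.sum_range_succ, ih]
      have := hrec n
      have : u n = c n - γ * c (n+1) := by linarith
      rw [this]
      ring
  have hlim : Filter.Tendsto (fun n => ∑ t ∈ Finset.range n, γ ^ t * u t)
      Filter.atTop (nhds (c 0)) := by
    simp only [hpartial]
    have h0 : Filter.Tendsto (fun n : ℕ => γ ^ n * c n) Filter.atTop (nhds 0) := by
      apply squeeze_zero_norm (fun n => ?_)
        (by simpa using (tendsto_pow_atTop_nhds_zero_of_lt_one hγ0 hγ1).const_mul M)
      rw [Real.norm_eq_abs, abs_mul, abs_pow, abs_of_nonneg hγ0]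
      calc γ ^ n * |c n| ≤ γ ^ n * M := mul_le_mul_of_nonneg_left (hb n) (pow_nonneg hγ0 n)
        _ = M * γ ^ n := by ring
    simpa using (tendsto_const_nhds (x := c 0)).sub h0
  have := hsummable.hasSum
  rwa [tendsto_nhds_unique this.tendsto_sum_nat hlim] at this

/-- Summability of `γ^t * d_t s * x`. -/
lemma summable_geom_dist (P : S → A → S → ℝ) (π : S → A → ℝ) (ρ : S → ℝ) (γ : ℝ)
    (hγ0 : 0 ≤ γ) (hγ1 : γ < 1)
    (hP0 : ∀ s a s', 0 ≤ P s a s') (hρ0 : ∀ s, 0 ≤ ρ s) (hπ0 : ∀ s a, 0 ≤ π s a)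
    (hP1 : ∀ s a, ∑ s', P s a s' = 1) (hρ1 : ∑ s, ρ s = 1) (hπ1 : ∀ s, ∑ a, π s a = 1)
    (s : S) (x : ℝ) :
    Summable (fun t : ℕ => γ ^ t * stateDist P π ρ t s * x) := by
  have hgeo : Summable (fun t : ℕ => γ ^ t * |x|) :=
    (summable_geometric_of_lt_one hγ0 hγ1).mul_right _
  refine Summable.of_abs (Summable.of_nonneg_of_le (fun t => abs_nonneg _) (fun t => ?_) hgeo)
  rw [abs_mul, abs_mul, abs_pow, abs_of_nonneg hγ0,
    abs_of_nonneg (stateDist_nonneg P π ρ hP0 hρ0 hπ0 t s)]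
  have h1 := stateDist_le_one P π ρ hP0 hρ0 hπ0 hP1 hρ1 hπ1 t s
  have h2 : (0:ℝ) ≤ γ ^ t := pow_nonneg hγ0 t
  have h3 : γ ^ t * stateDist P π ρ t s ≤ γ ^ t * 1 := mul_le_mul_of_nonneg_left h1 h2
  rw [mul_one] at h3
  exact mul_le_mul_of_nonneg_right h3 (abs_nonneg x)

/-- Performance difference lemma. -/
lemma perf_diff (P : S → A → S → ℝ) (r : S → A → ℝ) (γ : ℝ) (ρ : S → ℝ)
    (hγ0 : 0 ≤ γ) (hγ1 : γ < 1)
    (hP0 : ∀ s a s', 0 ≤ P s a s') (hP1 : ∀ s a, ∑ s', P s a s' = 1)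
    (hρ0 : ∀ s, 0 ≤ ρ s) (hρ1 : ∑ s, ρ s = 1)
    (π' : S → A → ℝ) (hπ'0 : ∀ s a, 0 ≤ π' s a) (hπ'1 : ∀ s, ∑ a, π' s a = 1)
    (V V' : S → ℝ)
    (hV' : ∀ s, V' s = ∑ a, π' s a * (r s a + γ * ∑ s', P s a s' * V' s')) :
    (1 - γ) * ∑ s, ρ s * (V' s - V s)
      = ∑ s, dvisit P π' ρ γ s *
          (∑ a, π' s a * ((r s a + γ * ∑ s', P s a s' * V s') - V s)) := by
  classical
  set D : S → ℝ := fun s => V' s - V s with hD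
  set g : S → ℝ := fun s => ∑ a, π' s a * ((r s a + γ * ∑ s', P s a s' * V s') - V s) with hg
  -- Step 1: Bellman-type recursion for D
  have hrecD : ∀ s, D s = g s + γ * ∑ a, π' s a * ∑ s', P s a s' * D s' := by
    intro s
    have hsum1 : ∑ a, π' s a * V s = V s := by
      rw [← Finset.sum_mul, hπ'1, one_mul]
    have e1 : g s = (∑ a, π' s a * (r s a + γ * ∑ s', P s a s' * V s')) - V s := by
      rw [hg]
      simp only [mul_sub]
      rw [Finset.sum_sub_distrib, hsum1]
    have e2 : ∀ (W : S → ℝ), ∑ a, π' s a * (r s a + γ * ∑ s', P s a s' * W s')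
        = (∑ a, π' s a * r s a) + γ * ∑ a, π' s a * ∑ s', P s a s' * W s' := by
      intro W
      rw [Finset.mul_sum, ← Finset.sum_add_distrib]
      congr 1 with a
      ring
    have e3 : ∀ a, ∑ s', P s a s' * D s'
        = (∑ s', P s a s' * V' s') - ∑ s', P s a s' * V s' := by
      intro a
      rw [← Finset.sum_sub_distrib]
      congr 1 with s'
      rw [hD]; ring
    have e4 : ∑ a, π' s a * ∑ s', P s a s' * D s'
        = (∑ a, π' s a * ∑ s', P s a s' * V' s') - ∑ a, π' s a * ∑ s', P s a s' * V s' := by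
      rw [← Finset.sum_sub_distrib]
      congr 1 with a
      rw [e3]; ring
    have h5 := hV' s
    rw [e2] at h5
    rw [hD]
    simp only []
    rw [e1, e4, h5, e2 V]
    ring
  -- Step 2: recursion for c t
  set c : ℕ → ℝ := fun t => ∑ s, stateDist P π' ρ t s * D s with hc
  set u : ℕ → ℝ := fun t => ∑ s, stateDist P π' ρ t s * g s with hu
  have hrecc : ∀ t, c t = u t + γ * c (t + 1) := by
    intro t
    have step : c (t + 1) = ∑ s, stateDist P π' ρ t s * ∑ a, π' s a * ∑ s', P s a s' * D s' := by
      rw [hc]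
      show ∑ s', (∑ s, ∑ a, stateDist P π' ρ t s * π' s a * P s a s') * D s' = _
      calc ∑ s', (∑ s, ∑ a, stateDist P π' ρ t s * π' s a * P s a s') * D s'
          = ∑ s', ∑ s, ∑ a, stateDist P π' ρ t s * π' s a * P s a s' * D s' := by
            congr 1 with s'
            rw [Finset.sum_mul]
            congr 1 with s
            rw [Finset.sum_mul]
        _ = ∑ s, ∑ s', ∑ a, stateDist P π' ρ t s * π' s a * P s a s' * D s' :=
            Finset.sum_comm
        _ = ∑ s, ∑ a, ∑ s', stateDist P π' ρ t s * π' s a * P s a s' * D s' := by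
            congr 1 with s
            exact Finset.sum_comm
        _ = ∑ s, stateDist P π' ρ t s * ∑ a, π' s a * ∑ s', P s a s' * D s' := by
            congr 1 with s
            rw [Finset.mul_sum]
            congr 1 with a
            rw [Finset.mul_sum, Finset.mul_sum]
            congr 1 with s'
            ring
    rw [step, hc, hu, Finset.mul_sum, ← Finset.sum_add_distrib]
    apply Finset.sum_congr rfl
    intro s _
    rw [hrecD s]
    ring
  -- Step 3: boundedness
  obtain ⟨M, hM⟩ : ∃ M : ℝ, ∀ s, |D s| ≤ M := by
    rcases isEmpty_or_nonempty S with h | h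
    · exact ⟨0, fun s => isEmptyElim s⟩
    · exact ⟨Finset.univ.sup' Finset.univ_nonempty (fun s => |D s|),
        fun s => Finset.le_sup' (fun s => |D s|) (Finset.mem_univ s)⟩
  have hMc : ∀ t, |c t| ≤ M := by
    intro t
    calc |c t| ≤ ∑ s, |stateDist P π' ρ t s * D s| := Finset.abs_sum_le_sum_abs _ _
      _ ≤ ∑ s, stateDist P π' ρ t s * M := by
          apply Finset.sum_le_sum
          intro s _
          rw [abs_mul, abs_of_nonneg (stateDist_nonneg P π' ρ hP0 hρ0 hπ'0 t s)]
          exact mul_le_mul_of_nonneg_left (hM s) (stateDist_nonneg P π' ρ hP0 hρ0 hπ'0 t s)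
      _ = M := by rw [← Finset.sum_mul, stateDist_sum_one P π' ρ hP1 hρ1 hπ'1, one_mul]
  -- Step 4: telescoping
  have hts := tele_hasSum γ hγ0 hγ1 c u M hrecc hMc
  have hc0 : c 0 = ∑ s, ρ s * D s := rfl
  -- Step 5: RHS rewriting
  have hRHS : ∑ s, dvisit P π' ρ γ s * g s
      = (1 - γ) * ∑' t : ℕ, γ ^ t * u t := by
    have e1 : ∀ s, dvisit P π' ρ γ s * g s
        = (1 - γ) * ∑' t : ℕ, γ ^ t * stateDist P π' ρ t s * g s := by
      intro s
      rw [dvisit, mul_assoc]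
      congr 1
      rw [← tsum_mul_right]
    rw [Finset.sum_congr rfl (fun s _ => e1 s), ← Finset.mul_sum]
    congr 1
    rw [← Summable.tsum_finsetSum (fun s _ => summable_geom_dist P π' ρ γ hγ0 hγ1 hP0 hρ0 hπ'0 hP1 hρ1 hπ'1 s (g s))]
    apply tsum_congr
    intro t
    rw [hu, Finset.mul_sum]
    apply Finset.sum_congr rfl
    intro s _
    ring
  rw [hRHS, hts.tsum_eq, hc0]

/-- `J(π') ≥ L^clip_π(π') − ε^π · D_TV(d^{π'}_ρ ‖ d^π_ρ)`. -/
theorem clipped_surrogate_lower_bound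
    [Nonempty S] [Nonempty A]
    (P : S → A → S → ℝ) (r : S → A → ℝ) (γ : ℝ) (ρ : S → ℝ)
    (hγ0 : 0 ≤ γ) (hγ1 : γ < 1)
    (hP0 : ∀ s a s', 0 ≤ P s a s') (hP1 : ∀ s a, ∑ s', P s a s' = 1)
    (hρ0 : ∀ s, 0 ≤ ρ s) (hρ1 : ∑ s, ρ s = 1)
    (π π' : S → A → ℝ)
    (hπ0 : ∀ s a, 0 < π s a) (hπ1 : ∀ s, ∑ a, π s a = 1)
    (hπ'0 : ∀ s a, 0 ≤ π' s a) (hπ'1 : ∀ s, ∑ a, π' s a = 1)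
    (ε : ℝ) (hε0 : 0 < ε) (hε1 : ε < 1)
    (V V' : S → ℝ)
    (hV : ∀ s, V s = ∑ a, π s a * (r s a + γ * ∑ s', P s a s' * V s'))
    (hV' : ∀ s, V' s = ∑ a, π' s a * (r s a + γ * ∑ s', P s a s' * V' s')) :
    (1 - γ) * ∑ s, ρ s * V' s
      ≥ ((1 - γ) * ∑ s, ρ s * V s
          + ∑ s, ∑ a, (dvisit P π ρ γ s * π s a) *
              min (((r s a + γ * ∑ s', P s a s' * V s') - V s) * (π' s a / π s a))
                  (((r s a + γ * ∑ s', P s a s' * V s') - V s)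
                      * clip (π' s a / π s a) (1 - ε) (1 + ε)))
        - (Finset.univ.sup' Finset.univ_nonempty
              (fun s => |∑ a, π' s a * ((r s a + γ * ∑ s', P s a s' * V s') - V s)|))
          * dTV (dvisit P π' ρ γ) (dvisit P π ρ γ) := by
  classical
  set Adv : S → A → ℝ := fun s a => (r s a + γ * ∑ s', P s a s' * V s') - V s with hAdv
  set g : S → ℝ := fun s => ∑ a, π' s a * Adv s a with hg
  set d : S → ℝ := dvisit P π ρ γ with hd
  set d' : S → ℝ := dvisit P π' ρ γ with hd'
  set M : ℝ := Finset.univ.sup' Finset.univ_nonempty (fun s => |g s|) with hM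
  have hMle : ∀ s, |g s| ≤ M := fun s => Finset.le_sup' (fun s => |g s|) (Finset.mem_univ s)
  -- performance difference
  have hpd := perf_diff P r γ ρ hγ0 hγ1 hP0 hP1 hρ0 hρ1 π' hπ'0 hπ'1 V V' hV'
  have hpd' : (1 - γ) * ∑ s, ρ s * V' s - (1 - γ) * ∑ s, ρ s * V s = ∑ s, d' s * g s := by
    rw [← hpd, ← mul_sub, ← Finset.sum_sub_distrib]
    congr 1
    apply Finset.sum_congr rfl
    intro s _
    ring
  -- nonnegativity of d
  have hd0 : ∀ s, 0 ≤ d s := by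
    intro s
    apply mul_nonneg (by linarith)
    apply tsum_nonneg
    intro t
    exact mul_nonneg (pow_nonneg hγ0 t)
      (stateDist_nonneg P π ρ hP0 hρ0 (fun s a => (hπ0 s a).le) t s)
  -- surrogate bound
  have hmin : ∑ s, ∑ a, (d s * π s a) *
        min (Adv s a * (π' s a / π s a)) (Adv s a * clip (π' s a / π s a) (1 - ε) (1 + ε))
      ≤ ∑ s, d s * g s := by
    apply Finset.sum_le_sum
    intro s _
    rw [hg]
    simp only
    rw [Finset.mul_sum]
    apply Finset.sum_le_sum
    intro a _
    have h1 : min (Adv s a * (π' s a / π s a)) (Adv s a * clip (π' s a / π s a) (1 - ε) (1 + ε))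
        ≤ Adv s a * (π' s a / π s a) := min_le_left _ _
    have hne : π s a ≠ 0 := (hπ0 s a).ne'
    have h2 : π s a * (Adv s a * (π' s a / π s a)) = π' s a * Adv s a := by
      field_simp
    calc (d s * π s a) * min (Adv s a * (π' s a / π s a))
            (Adv s a * clip (π' s a / π s a) (1 - ε) (1 + ε))
        ≤ (d s * π s a) * (Adv s a * (π' s a / π s a)) := by
          apply mul_le_mul_of_nonneg_left h1
          exact mul_nonneg (hd0 s) (hπ0 s a).le
      _ = d s * (π s a * (Adv s a * (π' s a / π s a))) := by ring
      _ = d s * (π' s a * Adv s a) := by rw [h2]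
  -- TV bound
  have htv : |∑ s, (d' s - d s) * g s| ≤ M * dTV d' d := by
    calc |∑ s, (d' s - d s) * g s| ≤ ∑ s, |(d' s - d s) * g s| :=
          Finset.abs_sum_le_sum_abs _ _
      _ ≤ ∑ s, |d' s - d s| * M := by
          apply Finset.sum_le_sum
          intro s _
          rw [abs_mul]
          exact mul_le_mul_of_nonneg_left (hMle s) (abs_nonneg _)
      _ = M * dTV d' d := by rw [dTV, ← Finset.sum_mul, mul_comm]
  have hsplit : ∑ s, d' s * g s = ∑ s, d s * g s + ∑ s, (d' s - d s) * g s := by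
    rw [← Finset.sum_add_distrib]
    apply Finset.sum_congr rfl
    intro s _
    ring
  have habs : -(M * dTV d' d) ≤ ∑ s, (d' s - d s) * g s := neg_le_of_abs_le htv
  linarith [hmin, hsplit, habs, hpd']
end
end

section
/- Donsker–Varadhan lower bound for the Kullback–Leibler divergence on a finite set: let X be a nonempty finite set, let p and q be probability distributions on X with q(x) > 0 for all x ∈ X, and let f : X → ℝ. Then ∑_{x∈X} p(x) f(x) − log( ∑_{x∈X} q(x) e^{f(x)} ) ≤ D_KL(p ‖ q). -/
open Finset

/-- Donsker–Varadhan lower bound for the Kullback–Leibler divergence on a finite set: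
`∑ p(x) f(x) − log(∑ q(x) e^{f(x)}) ≤ D_KL(p ‖ q)`. -/
theorem donsker_varadhan_lower_bound
    {X : Type*} [Fintype X] [Nonempty X]
    (p q : X → ℝ)
    (hp0 : ∀ x, 0 ≤ p x) (hp1 : ∑ x, p x = 1)
    (hq0 : ∀ x, 0 < q x) (hq1 : ∑ x, q x = 1)
    (f : X → ℝ) :
    (∑ x, p x * f x) - Real.log (∑ x, q x * Real.exp (f x))
      ≤ ∑ x ∈ Finset.univ.filter (fun x => 0 < p x),
          p x * Real.log (p x / q x) := by
  set Z := ∑ x, q x * Real.exp (f x) with hZdef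
  have hZpos : 0 < Z :=
    Finset.sum_pos (fun x _ => mul_pos (hq0 x) (Real.exp_pos _))
      ⟨Classical.arbitrary X, Finset.mem_univ _⟩
  set S := Finset.univ.filter (fun x => 0 < p x) with hS
  have hzero : ∀ x : X, x ∉ S → p x = 0 := by
    intro x hx
    rw [hS, Finset.mem_filter] at hx
    push_neg at hx
    exact le_antisymm (hx (Finset.mem_univ x)) (hp0 x)
  have hpf : ∑ x, p x * f x = ∑ x ∈ S, p x * f x := by
    symm
    apply Finset.sum_subset (Finset.filter_subset _ _)
    intro x _ hx
    rw [hzero x hx, zero_mul]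
  have hpS : ∑ x ∈ S, p x = 1 := by
    rw [← hp1]
    apply Finset.sum_subset (Finset.filter_subset _ _)
    intro x _ hx
    exact hzero x hx
  have key : ∀ x ∈ S,
      p x * f x - p x * Real.log Z - p x * Real.log (p x / q x)
        ≤ q x * Real.exp (f x) / Z - p x := by
    intro x hx
    have hpx : 0 < p x := (Finset.mem_filter.1 hx).2
    have hqx := hq0 x
    have ht : 0 < q x * Real.exp (f x) / (p x * Z) := by positivity
    have hlog := Real.log_le_sub_one_of_pos ht
    have hlt : Real.log (q x * Real.exp (f x) / (p x * Z))
        = f x - Real.log Z - Real.log (p x / q x) := by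
      rw [Real.log_div (by positivity) (by positivity),
        Real.log_mul (ne_of_gt hqx) (Real.exp_ne_zero _),
        Real.log_mul (ne_of_gt hpx) (ne_of_gt hZpos), Real.log_exp,
        Real.log_div (ne_of_gt hpx) (ne_of_gt hqx)]
      ring
    have h2 := mul_le_mul_of_nonneg_left hlog hpx.le
    rw [hlt] at h2
    calc p x * f x - p x * Real.log Z - p x * Real.log (p x / q x)
        = p x * (f x - Real.log Z - Real.log (p x / q x)) := by ring
      _ ≤ p x * (q x * Real.exp (f x) / (p x * Z) - 1) := h2
      _ = q x * Real.exp (f x) / Z - p x := by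
          field_simp
    ;
  have hsum := Finset.sum_le_sum key
  have hqZ : ∑ x ∈ S, q x * Real.exp (f x) ≤ Z := by
    apply Finset.sum_le_sum_of_subset_of_nonneg (Finset.filter_subset _ _)
    intro x _ _
    exact le_of_lt (mul_pos (hq0 x) (Real.exp_pos _))
  have hrhs : ∑ x ∈ S, (q x * Real.exp (f x) / Z - p x) ≤ 0 := by
    rw [Finset.sum_sub_distrib, hpS, ← Finset.sum_div]
    have : (∑ x ∈ S, q x * Real.exp (f x)) / Z ≤ 1 :=
      (div_le_one hZpos).2 hqZ
    linarith
  have hlhs : ∑ x ∈ S, (p x * f x - p x * Real.log Z - p x * Real.log (p x / q x))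
      = (∑ x, p x * f x) - Real.log Z - ∑ x ∈ S, p x * Real.log (p x / q x) := by
    rw [Finset.sum_sub_distrib, Finset.sum_sub_distrib, ← Finset.sum_mul, hpS, one_mul, hpf]
  linarith [le_trans (le_of_eq hlhs.symm) (le_trans hsum hrhs)]
end
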